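/- If R ∈ SO(3) is a symmetry of S (R '' S = S) and S is invariant under all rotations about the unit axis u but S is not invariant under all of SO(3), then R maps the line spanned by u to itself: R u = u or R u = -u. -/

import Mathlib

/-- Rotation of ℝ³ by angle `φ` about the axis through the origin in direction `u`
(Rodrigues' formula; when `‖u‖ = 1` this is the usual rotation `R_u(φ)`). -/
noncomputable def rot (u : EuclideanSpace ℝ (Fin 3)) (φ : ℝ) (x : EuclideanSpace ℝ (Fin 3)) :
    EuclideanSpace ℝ (Fin 3) :=
  let c : EuclideanSpace ℝ (Fin 3) := WithLp.toLp 2 (crossProduct u x)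
  Real.cos φ • x + Real.sin φ • c + ((1 - Real.cos φ) * (inner ℝ u x : ℝ)) • u

/-- SO(3): the subgroup of the orthogonal group of 3×3 real matrices consisting of
matrices of determinant 1 (acting on ℝ³ by matrix-vector multiplication). -/
def SO3 : Subgroup (Matrix.orthogonalGroup (Fin 3) ℝ) where
  carrier := {A | (A : Matrix (Fin 3) (Fin 3) ℝ).det = 1}
  one_mem' := by simp
  mul_mem' := by
    intro a b ha hb
    simp only [Set.mem_setOf_eq] at *
    rw [Submonoid.coe_mul, Matrix.det_mul, ha, hb, one_mul]
  inv_mem' := by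
    intro a ha
    simp only [Set.mem_setOf_eq] at *
    have h : ((a⁻¹ : Matrix.orthogonalGroup (Fin 3) ℝ) : Matrix (Fin 3) (Fin 3) ℝ) =
        star (a : Matrix (Fin 3) (Fin 3) ℝ) := rfl
    rw [h, Matrix.star_eq_conjTranspose, Matrix.det_conjTranspose, ha, star_one]


open Matrix Real

noncomputable def rot' (u : Fin 3 → ℝ) (φ : ℝ) (x : Fin 3 → ℝ) : Fin 3 → ℝ :=
  Real.cos φ • x + Real.sin φ • (crossProduct u x) + ((1 - Real.cos φ) * (u ⬝ᵥ x)) • u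

lemma dot_cross_comm (u x y : Fin 3 → ℝ) : x ⬝ᵥ (crossProduct u y) = -((crossProduct u x) ⬝ᵥ y) := by
  rw [triple_product_permutation x u y, dotProduct_comm ((crossProduct u) x) y,
    triple_product_permutation y u x, ← cross_anticomm, dotProduct_neg]

lemma rot'_dot (u : Fin 3 → ℝ) (hu : u ⬝ᵥ u = 1) (φ : ℝ) (x y : Fin 3 → ℝ) :
    (rot' u φ x) ⬝ᵥ (rot' u φ y) = x ⬝ᵥ y := by
  have h1 : (crossProduct u x) ⬝ᵥ (crossProduct u y)
      = (u ⬝ᵥ u) * (x ⬝ᵥ y) - (u ⬝ᵥ y) * (x ⬝ᵥ u) := by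
    simpa using cross_dot_cross u x u y
  have h2 := dot_cross_comm u x y
  have h3 : u ⬝ᵥ crossProduct u y = 0 := dot_self_cross u y
  have h4 : (crossProduct u x) ⬝ᵥ u = 0 := by
    rw [dotProduct_comm]; exact dot_self_cross u x
  have h5 : x ⬝ᵥ u = u ⬝ᵥ x := dotProduct_comm x u
  have h6 : y ⬝ᵥ u = u ⬝ᵥ y := dotProduct_comm y u
  have hs := sin_sq_add_cos_sq φ
  simp only [rot', dotProduct_add, add_dotProduct, dotProduct_smul, smul_dotProduct,
    smul_eq_mul, h1, h2, h3, h4, h5, h6, hu]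
  ring_nf
  linear_combination (x ⬝ᵥ y - (u ⬝ᵥ x) * (u ⬝ᵥ y)) * hs

lemma cross_cross_self (u x : Fin 3 → ℝ) :
    crossProduct u (crossProduct u x) = (u ⬝ᵥ x) • u - (u ⬝ᵥ u) • x := by
  funext i
  fin_cases i <;>
    simp [cross_apply, dotProduct, Fin.sum_univ_three, Pi.smul_apply, Pi.sub_apply] <;>
    ring

lemma rot'_zero (u x : Fin 3 → ℝ) : rot' u 0 x = x := by
  simp [rot']

lemma rot'_rot' (u : Fin 3 → ℝ) (hu : u ⬝ᵥ u = 1) (φ ψ : ℝ) (x : Fin 3 → ℝ) :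
    rot' u φ (rot' u ψ x) = rot' u (φ + ψ) x := by
  simp only [rot', map_add, _root_.map_smul, cross_self, dotProduct_add, dotProduct_smul,
    dot_self_cross, cross_cross_self, hu, smul_zero, smul_eq_mul, mul_zero,
    cos_add, sin_add, smul_sub, smul_smul]
  match_scalars <;> ring

noncomputable def rotM (u : Fin 3 → ℝ) (φ : ℝ) : Matrix (Fin 3) (Fin 3) ℝ :=
  Matrix.of fun i j => Real.cos φ * (if i = j then 1 else 0)
    + Real.sin φ * (!![0, -u 2, u 1; u 2, 0, -u 0; -u 1, u 0, 0] i j)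
    + (1 - Real.cos φ) * u i * u j

lemma mulVec_rotM (u : Fin 3 → ℝ) (φ : ℝ) (x : Fin 3 → ℝ) :
    (rotM u φ).mulVec x = rot' u φ x := by
  funext i
  fin_cases i <;>
    simp [rotM, rot', Matrix.mulVec, dotProduct, Fin.sum_univ_three, cross_apply,
      Matrix.vecHead, Matrix.vecTail, Pi.smul_apply] <;>
    ring

lemma mulVec_ext {A B : Matrix (Fin 3) (Fin 3) ℝ} (h : ∀ x, A.mulVec x = B.mulVec x) :
    A = B := by
  ext i j
  have := congrFun (h (Pi.single j 1)) i
  simpa [Matrix.mulVec_single] using this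

lemma rotM_mem (u : Fin 3 → ℝ) (hu : u ⬝ᵥ u = 1) (φ : ℝ) :
    rotM u φ ∈ Matrix.orthogonalGroup (Fin 3) ℝ := by
  rw [Matrix.mem_orthogonalGroup_iff']
  ext i j
  have h := rot'_dot u hu φ (Pi.single i 1) (Pi.single j 1)
  rw [← mulVec_rotM, ← mulVec_rotM] at h
  simp only [Matrix.mulVec_single, mul_one] at h
  rw [Matrix.mul_apply]
  simp only [Matrix.transpose_apply]
  rcases eq_or_ne i j with rfl | hij
  · simpa [dotProduct, Pi.single_apply, Fin.sum_univ_three, Matrix.one_apply] using h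
  · simpa [dotProduct, Pi.single_apply, Fin.sum_univ_three, Matrix.one_apply, hij,
      Ne.symm hij] using h

lemma rotM_det (u : Fin 3 → ℝ) (hu : u ⬝ᵥ u = 1) (φ : ℝ) : (rotM u φ).det = 1 := by
  have hsq : rotM u φ = rotM u (φ/2) * rotM u (φ/2) := by
    apply mulVec_ext
    intro x
    rw [← Matrix.mulVec_mulVec, mulVec_rotM, mulVec_rotM, mulVec_rotM, rot'_rot' u hu]
    norm_num
  have h1 : (rotM u φ).det ^ 2 = 1 := by
    have := rotM_mem u hu φ
    rw [Matrix.mem_orthogonalGroup_iff'] at this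
    have := congrArg Matrix.det this
    rwa [Matrix.det_mul, Matrix.det_one,
      Matrix.det_transpose, ← sq] at this
  have h2 : 0 ≤ (rotM u φ).det := by
    rw [hsq, Matrix.det_mul]
    exact mul_self_nonneg _
  nlinarith

lemma dotQ (hA : A ∈ Matrix.orthogonalGroup (Fin 3) ℝ) (x y : Fin 3 → ℝ) :
    (A.mulVec x) ⬝ᵥ (A.mulVec y) = x ⬝ᵥ y := by
  rw [Matrix.mem_orthogonalGroup_iff'] at hA
  rw [Matrix.dotProduct_mulVec, ← Matrix.mulVec_transpose, Matrix.mulVec_mulVec, hA,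
    Matrix.one_mulVec]

lemma mulVec_surj (hA : A ∈ Matrix.orthogonalGroup (Fin 3) ℝ) (w : Fin 3 → ℝ) :
    ∃ z, A.mulVec z = w := by
  rw [Matrix.mem_orthogonalGroup_iff] at hA
  exact ⟨(Aᵀ).mulVec w, by rw [Matrix.mulVec_mulVec, hA, Matrix.one_mulVec]⟩

lemma det_rows (z x y : Fin 3 → ℝ) :
    Matrix.det ![A.mulVec z, A.mulVec x, A.mulVec y]
      = Matrix.det ![z, x, y] * Aᵀ.det := by
  have h : (![A.mulVec z, A.mulVec x, A.mulVec y] : Matrix (Fin 3) (Fin 3) ℝ)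
      = (Matrix.of ![z, x, y]) * Aᵀ := by
    ext i j
    fin_cases i <;>
      simp [Matrix.mul_apply, Matrix.mulVec, dotProduct, Fin.sum_univ_three, mul_comm]
  rw [show (![A.mulVec z, A.mulVec x, A.mulVec y] : Matrix (Fin 3) (Fin 3) ℝ)
      = (Matrix.of ![z, x, y]) * Aᵀ from h, Matrix.det_mul]
  rfl

lemma crossQ (hA : A ∈ Matrix.orthogonalGroup (Fin 3) ℝ) (hdet : A.det = 1) (x y : Fin 3 → ℝ) :
    crossProduct (A.mulVec x) (A.mulVec y) = A.mulVec (crossProduct x y) := by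
  have hdt : Aᵀ.det = 1 := by rw [Matrix.det_transpose]; exact hdet
  have key : ∀ w, w ⬝ᵥ (crossProduct (A.mulVec x) (A.mulVec y)) = w ⬝ᵥ (A.mulVec (crossProduct x y)) := by
    intro w
    obtain ⟨z, rfl⟩ := mulVec_surj hA w
    rw [triple_product_eq_det, det_rows (A := A) z x y, hdt, mul_one,
      ← triple_product_eq_det, ← dotQ hA z (crossProduct x y)]
  funext i
  have := key (Pi.single i 1)
  simpa [single_dotProduct] using this

lemma conjQ (hA : A ∈ Matrix.orthogonalGroup (Fin 3) ℝ) (hdet : A.det = 1) (b : Fin 3 → ℝ)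
    (ψ : ℝ) (x : Fin 3 → ℝ) :
    A.mulVec (rot' b ψ x) = rot' (A.mulVec b) ψ (A.mulVec x) := by
  simp only [rot', Matrix.mulVec_add, Matrix.mulVec_smul, crossQ hA hdet, dotQ hA]

lemma dot_self_nonneg (x : Fin 3 → ℝ) : 0 ≤ x ⬝ᵥ x :=
  Finset.sum_nonneg fun i _ => mul_self_nonneg (x i)

lemma eq_of_dot_eq_one {a w : Fin 3 → ℝ} (ha : a ⬝ᵥ a = 1) (hw : w ⬝ᵥ w = 1)
    (h : a ⬝ᵥ w = 1) : w = a := by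
  have h0 : (w - a) ⬝ᵥ (w - a) = 0 := by
    simp only [sub_dotProduct, dotProduct_sub]
    rw [hw, ha, dotProduct_comm w a, h]; ring
  have := (dotProduct_self_eq_zero (v := w - a)).mp h0
  exact sub_eq_zero.mp this

lemma exists_cos_sin {c s : ℝ} (h : c ^ 2 + s ^ 2 = 1) :
    ∃ φ : ℝ, Real.cos φ = c ∧ Real.sin φ = s := by
  have hc1 : -1 ≤ c := by nlinarith
  have hc2 : c ≤ 1 := by nlinarith
  rcases le_or_gt 0 s with hs | hs
  · exact ⟨Real.arccos c, Real.cos_arccos hc1 hc2, by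
      rw [Real.sin_arccos, show 1 - c ^ 2 = s ^ 2 by linarith, Real.sqrt_sq hs]⟩
  · exact ⟨-Real.arccos c, by rw [Real.cos_neg]; exact Real.cos_arccos hc1 hc2, by
      rw [Real.sin_neg, Real.sin_arccos, show 1 - c ^ 2 = s ^ 2 by linarith,
        Real.sqrt_sq_eq_abs, abs_of_neg hs, neg_neg]⟩

lemma basis_expansion {a p n : Fin 3 → ℝ} (haa : a ⬝ᵥ a = 1) (hpp : p ⬝ᵥ p = 1)
    (hnn : n ⬝ᵥ n = 1) (hap : a ⬝ᵥ p = 0) (han : a ⬝ᵥ n = 0) (hpn : p ⬝ᵥ n = 0)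
    (x : Fin 3 → ℝ) : x = (a ⬝ᵥ x) • a + (p ⬝ᵥ x) • p + (n ⬝ᵥ x) • n := by
  set M : Matrix (Fin 3) (Fin 3) ℝ := Matrix.of ![a, p, n] with hM
  have hMMt : M * Mᵀ = 1 := by
    ext i j
    fin_cases i <;> fin_cases j <;>
      simp only [hM, Matrix.mul_apply, Matrix.transpose_apply, Fin.sum_univ_three,
        Matrix.of_apply, Matrix.cons_val', Matrix.cons_val_zero, Matrix.cons_val_one,
        Matrix.head_cons, Matrix.one_apply, Matrix.cons_val_two, Matrix.tail_cons,
        Matrix.empty_val', Matrix.cons_val_fin_one] <;>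
      simp_all [dotProduct, Fin.sum_univ_three, dotProduct_comm] <;>
      linarith [dotProduct_comm a p, dotProduct_comm a n, dotProduct_comm p n]
  have hMtM : Mᵀ * M = 1 := by rwa [mul_eq_one_comm] at hMMt
  have hx : (Mᵀ * M).mulVec x = x := by rw [hMtM, Matrix.one_mulVec]
  rw [← Matrix.mulVec_mulVec] at hx
  conv_lhs => rw [← hx]
  funext j
  simp [hM, Matrix.mulVec, dotProduct, Fin.sum_univ_three, Matrix.transpose_apply]
  ring

lemma rot'_circle_trans {a x y : Fin 3 → ℝ} (ha : a ⬝ᵥ a = 1) (hx : x ⬝ᵥ x = 1)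
    (hy : y ⬝ᵥ y = 1) (hxy : a ⬝ᵥ x = a ⬝ᵥ y) : ∃ φ, rot' a φ x = y := by
  set t := a ⬝ᵥ x with ht
  set p := x - t • a with hp
  set q := y - t • a with hq
  have hap : a ⬝ᵥ p = 0 := by simp [hp, dotProduct_sub, ha, ht]
  have haq : a ⬝ᵥ q = 0 := by simp [hq, dotProduct_sub, ha, ← hxy, ht]
  have hpdot : p ⬝ᵥ p = 1 - t ^ 2 := by
    simp only [hp, sub_dotProduct, dotProduct_sub, dotProduct_smul, smul_dotProduct,
      smul_eq_mul, hx, ha, dotProduct_comm x a, ← ht]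
    ring
  have hqdot : q ⬝ᵥ q = 1 - t ^ 2 := by
    simp only [hq, sub_dotProduct, dotProduct_sub, dotProduct_smul, smul_dotProduct,
      smul_eq_mul, hy, ha, dotProduct_comm y a, ← hxy, ← ht]
    ring
  have hxp : x = t • a + p := by rw [hp]; abel
  have hyq : y = t • a + q := by rw [hq]; abel
  rcases eq_or_lt_of_le (dot_self_nonneg p) with h0 | hpos
  · -- p = 0 hence q = 0, x = y
    have hp0 : p = 0 := (dotProduct_self_eq_zero).mp h0.symm
    have hq0 : q = 0 := (dotProduct_self_eq_zero).mp (by rw [hqdot, ← hpdot, ← h0.symm]; )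
    refine ⟨0, ?_⟩
    rw [rot'_zero, hxp, hyq, hp0, hq0]
  · set n := crossProduct a p with hn
    have hnn : n ⬝ᵥ n = 1 - t ^ 2 := by
      rw [hn]; rw [cross_dot_cross a p a p, ha, hap, hpdot]; ring
    have han : a ⬝ᵥ n = 0 := dot_self_cross a p
    have hpn : p ⬝ᵥ n = 0 := dot_cross_self a p
    set r2 := 1 - t ^ 2 with hr2
    have hr2pos : 0 < r2 := by rw [← hpdot]; exact hpos
    set r := Real.sqrt r2 with hr
    have hrpos : 0 < r := Real.sqrt_pos.mpr hr2pos
    have hrsq : r * r = r2 := Real.mul_self_sqrt hr2pos.le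
    -- orthonormal triple a, r⁻¹ • p, r⁻¹ • n
    have hexp := basis_expansion ha
      (show (r⁻¹ • p) ⬝ᵥ (r⁻¹ • p) = 1 by
        simp only [smul_dotProduct, dotProduct_smul, smul_eq_mul, hpdot, ← hr2]
        field_simp
        nlinarith)
      (show (r⁻¹ • n) ⬝ᵥ (r⁻¹ • n) = 1 by
        simp only [smul_dotProduct, dotProduct_smul, smul_eq_mul, hnn, ← hr2]
        field_simp
        nlinarith)
      (show a ⬝ᵥ (r⁻¹ • p) = 0 by simp [dotProduct_smul, hap])
      (show a ⬝ᵥ (r⁻¹ • n) = 0 by simp [dotProduct_smul, han])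
      (show (r⁻¹ • p) ⬝ᵥ (r⁻¹ • n) = 0 by simp [smul_dotProduct, dotProduct_smul, hpn])
      q
    rw [haq] at hexp
    set c := (p ⬝ᵥ q) / r2 with hc
    set s := (n ⬝ᵥ q) / r2 with hs
    have hsc : ∀ z : ℝ, r⁻¹ * z * r⁻¹ = z / r2 := by
      intro z
      rw [← hrsq]
      field_simp
    have hexp2 : q = c • p + s • n := by
      rw [hexp]
      simp only [smul_dotProduct, smul_eq_mul, zero_smul, zero_add, smul_smul, hsc, hc, hs]
    have hcs : c ^ 2 + s ^ 2 = 1 := by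
      have : q ⬝ᵥ q = (c ^ 2 + s ^ 2) * r2 := by
        conv_lhs => rw [hexp2]
        simp only [dotProduct_add, add_dotProduct, dotProduct_smul, smul_dotProduct,
          smul_eq_mul, hpdot, hnn, hpn, ← hr2, dotProduct_comm n p, hpn]
        ring
      rw [hqdot] at this
      have h' : (c ^ 2 + s ^ 2) * r2 = 1 * r2 := by linarith
      exact mul_right_cancel₀ (ne_of_gt hr2pos) h'
    obtain ⟨φ, hφc, hφs⟩ := exists_cos_sin hcs
    refine ⟨φ, ?_⟩
    have hax : crossProduct a x = n := by
      rw [hxp, map_add, _root_.map_smul, cross_self, smul_zero, zero_add, hn]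
    rw [rot', hφc, hφs, hax, ← ht, hxp, hyq, hexp2]
    module

lemma exists_orth (w : Fin 3 → ℝ) : ∃ e, w ⬝ᵥ e = 0 ∧ e ⬝ᵥ e = 1 := by
  rcases eq_or_lt_of_le (add_nonneg (mul_self_nonneg (w 1)) (mul_self_nonneg (w 2))) with h | h
  · refine ⟨![0, 1, 0], ?_, ?_⟩
    · have h1 : w 1 = 0 := by nlinarith [mul_self_nonneg (w 1), mul_self_nonneg (w 2)]
      simp [dotProduct, Fin.sum_univ_three, h1]
    · simp [dotProduct, Fin.sum_univ_three]
  · set r := Real.sqrt (w 1 * w 1 + w 2 * w 2) with hr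
    have hrpos : 0 < r := Real.sqrt_pos.mpr h
    have hrsq : r * r = w 1 * w 1 + w 2 * w 2 := Real.mul_self_sqrt h.le
    refine ⟨r⁻¹ • ![0, w 2, -(w 1)], ?_, ?_⟩
    · simp [dotProduct, Fin.sum_univ_three, Pi.smul_apply]
      ring
    · simp only [dotProduct, Fin.sum_univ_three, Pi.smul_apply, smul_eq_mul,
        Matrix.cons_val_zero, Matrix.cons_val_one, Matrix.head_cons,
        Matrix.cons_val_two, Matrix.tail_cons]
    
      field_simp
      nlinarith [hrsq]

lemma euler {A : Matrix (Fin 3) (Fin 3) ℝ} (hA : A ∈ Matrix.orthogonalGroup (Fin 3) ℝ)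
    (hdet : A.det = 1) :
    ∃ w φ, w ⬝ᵥ w = 1 ∧ ∀ x, A.mulVec x = rot' w φ x := by
  have hAtA : Aᵀ * A = 1 := by
    have := (Matrix.mem_orthogonalGroup_iff' (Fin 3) ℝ).mp hA
    exact this
  have hdetT : Aᵀ.det = 1 := by rw [Matrix.det_transpose]; exact hdet
  -- det (A - 1) = 0
  have hdet0 : (A - 1).det = 0 := by
    have h1 : Aᵀ * (A - 1) = (1 - A)ᵀ := by
      rw [Matrix.mul_sub, mul_one, hAtA, Matrix.transpose_sub, Matrix.transpose_one]
    have h2 := congrArg Matrix.det h1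
    rw [Matrix.det_mul, hdetT, one_mul, Matrix.det_transpose,
      show (1 : Matrix (Fin 3) (Fin 3) ℝ) - A = -(A - 1) by rw [neg_sub], Matrix.det_neg] at h2
    simp at h2
    linarith
  obtain ⟨v, hv0, hvA⟩ := (Matrix.exists_mulVec_eq_zero_iff).mpr hdet0
  have hAv : A.mulVec v = v := by
    rw [Matrix.sub_mulVec, Matrix.one_mulVec, sub_eq_zero] at hvA
    exact hvA
  have hvv : 0 < v ⬝ᵥ v :=
    lt_of_le_of_ne (dot_self_nonneg v) (fun h => hv0 (dotProduct_self_eq_zero.mp h.symm))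
  obtain ⟨w, hww, hAw⟩ : ∃ w : Fin 3 → ℝ, w ⬝ᵥ w = 1 ∧ A.mulVec w = w := by
    set nv := Real.sqrt (v ⬝ᵥ v) with hnv
    have hnvpos : 0 < nv := Real.sqrt_pos.mpr hvv
    refine ⟨nv⁻¹ • v, ?_, ?_⟩
    · simp only [smul_dotProduct, dotProduct_smul, smul_eq_mul]
      rw [show nv⁻¹ * (nv⁻¹ * (v ⬝ᵥ v)) = (v ⬝ᵥ v) / (nv * nv) by ring,
        Real.mul_self_sqrt hvv.le, div_self hvv.ne']
    · rw [Matrix.mulVec_smul, hAv]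
  obtain ⟨e1, hwe1, he1⟩ := exists_orth w
  set e2 := crossProduct w e1 with he2
  have he2e2 : e2 ⬝ᵥ e2 = 1 := by
    rw [he2, cross_dot_cross, hww, he1, hwe1]; ring
  have hwe2 : w ⬝ᵥ e2 = 0 := dot_self_cross w e1
  have he1e2 : e1 ⬝ᵥ e2 = 0 := dot_cross_self w e1
  set c := e1 ⬝ᵥ (A.mulVec e1) with hc
  set s := e2 ⬝ᵥ (A.mulVec e1) with hs
  have hwAe1 : w ⬝ᵥ (A.mulVec e1) = 0 := by
    rw [← hAw, dotQ hA, hwe1]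
  have hQe1 : A.mulVec e1 = c • e1 + s • e2 := by
    have := basis_expansion hww he1 he2e2 hwe1 hwe2 he1e2 (A.mulVec e1)
    rw [hwAe1, zero_smul, zero_add] at this
    exact this
  have hcs : c ^ 2 + s ^ 2 = 1 := by
    have h1 : (A.mulVec e1) ⬝ᵥ (A.mulVec e1) = 1 := by rw [dotQ hA, he1]
    rw [hQe1] at h1
    simp only [dotProduct_add, add_dotProduct, dotProduct_smul, smul_dotProduct,
      smul_eq_mul, he1, he2e2, he1e2, dotProduct_comm e2 e1, he1e2] at h1
    nlinarith [h1]
  have hwze2 : crossProduct w e2 = -e1 := by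
    rw [he2, cross_cross_self, hwe1, hww]
    simp
  have hQe2 : A.mulVec e2 = (-s) • e1 + c • e2 := by
    rw [he2, ← crossQ hA hdet w e1, hAw, hQe1, map_add, _root_.map_smul, _root_.map_smul,
      ← he2, hwze2]
    rw [smul_neg]
    module
  obtain ⟨φ, hφc, hφs⟩ := exists_cos_sin hcs
  refine ⟨w, φ, hww, fun x => ?_⟩
  have hx := basis_expansion hww he1 he2e2 hwe1 hwe2 he1e2 x
  have hrw : rot' w φ w = w := by
    simp only [rot', hφc, hφs, cross_self, smul_zero, add_zero, hww, mul_one]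
    module
  have hre1 : rot' w φ e1 = c • e1 + s • e2 := by
    simp only [rot', hφc, hφs, ← he2, hwe1, mul_zero, zero_smul, add_zero]
    try module
  have hre2 : rot' w φ e2 = (-s) • e1 + c • e2 := by
    simp only [rot', hφc, hφs, hwze2, hwe2, mul_zero, zero_smul, add_zero, smul_neg]
    module
  have hlin : ∀ (r1 r2 r3 : ℝ), rot' w φ (r1 • w + r2 • e1 + r3 • e2)
      = r1 • rot' w φ w + r2 • rot' w φ e1 + r3 • rot' w φ e2 := by
    intro r1 r2 r3
    simp only [rot', map_add, _root_.map_smul, dotProduct_add, dotProduct_smul, smul_eq_mul]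
    module
  conv_rhs => rw [hx, hlin, hrw, hre1, hre2]
  conv_lhs => rw [hx]
  rw [Matrix.mulVec_add, Matrix.mulVec_add, Matrix.mulVec_smul,
    Matrix.mulVec_smul, Matrix.mulVec_smul, hAw, hQe1, hQe2]

lemma dot_sq_le_one {a w : Fin 3 → ℝ} (ha : a ⬝ᵥ a = 1) (hw : w ⬝ᵥ w = 1) :
    (a ⬝ᵥ w) ^ 2 ≤ 1 := by
  have h := dot_self_nonneg (crossProduct a w)
  rw [cross_dot_cross, ha, hw, dotProduct_comm w a] at h
  nlinarith

lemma exists_mid {a w : Fin 3 → ℝ} (ha : a ⬝ᵥ a = 1) (hw : w ⬝ᵥ w = 1) (t : ℝ)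
    (hg1 : a ⬝ᵥ w < 1) (hg2 : -1 < a ⬝ᵥ w) (hgt : 2 * t ^ 2 - 1 ≤ a ⬝ᵥ w) :
    ∃ c, c ⬝ᵥ c = 1 ∧ a ⬝ᵥ c = t ∧ c ⬝ᵥ w = t := by
  set g := a ⬝ᵥ w with hg
  have h1g : 0 < 1 + g := by linarith
  have h1g' : 0 < 1 - g := by linarith
  have h1gsq : 0 < 1 - g ^ 2 := by nlinarith
  set n := crossProduct a w with hn
  have hnn : n ⬝ᵥ n = 1 - g ^ 2 := by
    rw [hn, cross_dot_cross, ha, hw, dotProduct_comm w a, ← hg]; ring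
  have han : a ⬝ᵥ n = 0 := dot_self_cross a w
  have hwn : w ⬝ᵥ n = 0 := dot_cross_self a w
  set α := t / (1 + g) with hα
  set γsq := (1 + g - 2 * t ^ 2) / ((1 + g) * (1 - g ^ 2)) with hγsq
  have hγsqnn : 0 ≤ γsq := by
    apply div_nonneg (by linarith)
    positivity
  set γ := Real.sqrt γsq with hγ
  have hγγ : γ * γ = γsq := Real.mul_self_sqrt hγsqnn
  have hα' : α * (1 + g) = t := by rw [hα]; field_simp
  have hγγ' : γ * γ * ((1 + g) * (1 - g ^ 2)) = 1 + g - 2 * t ^ 2 := by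
    rw [hγγ, hγsq]; field_simp
  refine ⟨α • (a + w) + γ • n, ?_, ?_, ?_⟩
  · simp only [dotProduct_add, add_dotProduct, dotProduct_smul, smul_dotProduct, smul_eq_mul,
      ha, hw, han, hwn, dotProduct_comm n a, dotProduct_comm n w, dotProduct_comm w a,
      ← hg, hnn, han]
    have hD : ((1 + g) * (1 - g ^ 2)) ≠ 0 := ne_of_gt (by positivity)
    apply mul_right_cancel₀ hD
    linear_combination (2 * (1 - g ^ 2) * (α * (1 + g) + t)) * hα' + (1 - g ^ 2) * hγγ'
  · simp only [dotProduct_add, dotProduct_smul, smul_eq_mul, ha, han, ← hg]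
    linear_combination hα'
  · simp only [add_dotProduct, smul_dotProduct, smul_eq_mul, dotProduct_add, hw,
      dotProduct_comm n w, hwn, dotProduct_comm w a, ← hg]
    linear_combination hα'

section Step
variable {P : (Fin 3 → ℝ) → Prop}
variable (hunit : ∀ a, P a → a ⬝ᵥ a = 1)
variable (hclos : ∀ a b φ, P a → P b → P (rot' a φ b))
variable (hneg : ∀ a, P a → P (-a))

include hunit hclos hneg in
lemma step_lemma {t : ℝ} {a b w : Fin 3 → ℝ} (hPa : P a) (hPb : P b) (hab : a ⬝ᵥ b = t)
    (hw : w ⬝ᵥ w = 1) (hgt : 2 * t ^ 2 - 1 ≤ a ⬝ᵥ w) :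
    P w ∧ ∃ c, P c ∧ w ⬝ᵥ c = t := by
  have ha := hunit a hPa
  have hb := hunit b hPb
  have hsq := dot_sq_le_one ha hw
  rcases eq_or_lt_of_le (show a ⬝ᵥ w ≤ 1 by nlinarith) with h1 | h1
  · -- w = a
    have hwa : w = a := eq_of_dot_eq_one ha hw h1
    subst hwa
    exact ⟨hPa, b, hPb, hab⟩
  rcases eq_or_lt_of_le (show -1 ≤ a ⬝ᵥ w by nlinarith) with h2 | h2
  · -- w = -a
    have hwa : w = -a := by
      have hna : (-a) ⬝ᵥ (-a) = 1 := by simpa using ha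
      have : (-a) ⬝ᵥ w = 1 := by rw [neg_dotProduct]; linarith
      rw [eq_of_dot_eq_one hna hw this]
    subst hwa
    refine ⟨hneg a hPa, -b, hneg b hPb, ?_⟩
    rw [neg_dotProduct, dotProduct_neg, neg_neg, hab]
  obtain ⟨c, hcc, hac, hcw⟩ := exists_mid ha hw t h1 h2 hgt
  have hPc : P c := by
    obtain ⟨φ, hφ⟩ := rot'_circle_trans ha hb hcc (by rw [hab, hac])
    rw [← hφ]; exact hclos a b φ hPa hPb
  have hPw : P w := by
    obtain ⟨ψ, hψ⟩ := rot'_circle_trans hcc ha hw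
      (by rw [dotProduct_comm c a, hac, hcw])
    rw [← hψ]; exact hclos c a ψ hPc hPa
  exact ⟨hPw, c, hPc, by rw [dotProduct_comm w c, hcw]⟩

include hunit hclos hneg in
lemma reach {t : ℝ} {a b : Fin 3 → ℝ} (ht0 : 0 ≤ t) (ht1 : t < 1)
    (hPa : P a) (hPb : P b) (hab : a ⬝ᵥ b = t) :
    ∀ w, w ⬝ᵥ w = 1 → P w := by
  intro w hw
  have ha := hunit a hPa
  have hsq := dot_sq_le_one ha hw
  -- dispatch w = ±a
  rcases eq_or_lt_of_le (show a ⬝ᵥ w ≤ 1 by nlinarith) with h1 | h1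
  · rw [eq_of_dot_eq_one ha hw h1]; exact hPa
  rcases eq_or_lt_of_le (show -1 ≤ a ⬝ᵥ w by nlinarith) with h2 | h2
  · have hna : (-a) ⬝ᵥ (-a) = 1 := by simpa using ha
    have : (-a) ⬝ᵥ w = 1 := by rw [neg_dotProduct]; linarith
    rw [eq_of_dot_eq_one hna hw this]
    exact hneg a hPa
  -- set up the great circle from a to w
  set g := a ⬝ᵥ w with hgdef
  have h1gsq : 0 < 1 - g ^ 2 := by nlinarith
  obtain ⟨p, hpp, hpa, hpw⟩ : ∃ p, p ⬝ᵥ p = 1 ∧ p ⬝ᵥ a = 0 ∧ p ⬝ᵥ w = 0 := by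
    set n0 := crossProduct a w with hn0
    have hn0n0 : n0 ⬝ᵥ n0 = 1 - g ^ 2 := by
      rw [hn0, cross_dot_cross, ha, hw, dotProduct_comm w a, ← hgdef]; ring
    set r := Real.sqrt (1 - g ^ 2) with hr
    have hrpos : 0 < r := Real.sqrt_pos.mpr h1gsq
    have hrr : r * r = 1 - g ^ 2 := Real.mul_self_sqrt h1gsq.le
    refine ⟨r⁻¹ • n0, ?_, ?_, ?_⟩
    · simp only [smul_dotProduct, dotProduct_smul, smul_eq_mul, hn0n0]
      field_simp
      nlinarith
    · rw [smul_dotProduct, hn0, dotProduct_comm, dot_self_cross, smul_zero]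
    · rw [smul_dotProduct, hn0, dotProduct_comm, dot_cross_self, smul_zero]
  obtain ⟨θ, hrot⟩ : ∃ θ, rot' p θ a = w := by
    set q := crossProduct p a with hq
    have hqq : q ⬝ᵥ q = 1 := by rw [hq, cross_dot_cross, hpp, ha, hpa]; ring
    have haq : a ⬝ᵥ q = 0 := dot_cross_self p a
    have hpq : p ⬝ᵥ q = 0 := dot_self_cross p a
    have hexp := basis_expansion ha hpp hqq (by rw [dotProduct_comm]; exact hpa) haq hpq w
    rw [hpw, zero_smul, add_zero] at hexp
    have hgh : g ^ 2 + (q ⬝ᵥ w) ^ 2 = 1 := by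
      have : w ⬝ᵥ w = g ^ 2 + (q ⬝ᵥ w) ^ 2 := by
        conv_lhs => rw [hexp]
        simp only [dotProduct_add, add_dotProduct, dotProduct_smul, smul_dotProduct,
          smul_eq_mul, ha, hqq, haq, dotProduct_comm q a, haq, ← hgdef]
        ring
      rw [hw] at this; linarith
    obtain ⟨θ, hθc, hθs⟩ := exists_cos_sin hgh
    refine ⟨θ, ?_⟩
    rw [rot', hθc, hθs, ← hq, hpa, mul_zero, zero_smul, add_zero]
    conv_rhs => rw [hexp]
  clear hgdef h1gsq hsq h1 h2
  -- choose number of steps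
  obtain ⟨m, δ, hm0, hδθ, hcosδ⟩ : ∃ (m : ℕ) (δ : ℝ), 0 < m ∧ (m : ℝ) * δ = θ ∧
      2 * t ^ 2 - 1 ≤ Real.cos δ := by
    have h2t : 0 < 2 * Real.sqrt (1 - t ^ 2) := by
      have : 0 < 1 - t ^ 2 := by nlinarith
      positivity
    obtain ⟨m0, hm0⟩ := exists_nat_ge (|θ| / (2 * Real.sqrt (1 - t ^ 2)))
    refine ⟨m0 + 1, θ / (m0 + 1), Nat.succ_pos m0, ?_, ?_⟩
    · push_cast
      field_simp
    · have hmpos : (0 : ℝ) < (m0 : ℝ) + 1 := by positivity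
      have hδle : |θ / ((m0 : ℝ) + 1)| ≤ 2 * Real.sqrt (1 - t ^ 2) := by
        rw [abs_div, abs_of_pos hmpos, div_le_iff₀ hmpos]
        have hm0' : |θ| / (2 * Real.sqrt (1 - t ^ 2)) ≤ (m0 : ℝ) + 1 := by
          push_cast at hm0 ⊢; linarith
        rw [div_le_iff₀ h2t] at hm0'
        linarith
      have h1 := Real.one_sub_sq_div_two_le_cos (x := θ / ((m0 : ℝ) + 1))
      have h2 : (θ / ((m0 : ℝ) + 1)) ^ 2 ≤ (2 * Real.sqrt (1 - t ^ 2)) ^ 2 := by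
        rw [← sq_abs]
        exact pow_le_pow_left₀ (abs_nonneg _) hδle 2
      have h3 : (2 * Real.sqrt (1 - t ^ 2)) ^ 2 = 4 * (1 - t ^ 2) := by
        rw [mul_pow, Real.sq_sqrt (by nlinarith : (0:ℝ) ≤ 1 - t ^ 2)]; norm_num
      push_cast
      linarith
  -- induction along the chain
  have key : ∀ k : ℕ, P (rot' p ((k : ℝ) * δ) a) ∧
      ∃ c, P c ∧ (rot' p ((k : ℝ) * δ) a) ⬝ᵥ c = t := by
    intro k
    induction k with
    | zero =>
      simp only [Nat.cast_zero, zero_mul, rot'_zero]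
      exact ⟨hPa, b, hPb, hab⟩
    | succ k ih =>
      obtain ⟨hPk, c, hPc, hck⟩ := ih
      have hwku : (rot' p ((k : ℝ) * δ) a) ⬝ᵥ (rot' p ((k : ℝ) * δ) a) = 1 := by
        rw [rot'_dot p hpp, ha]
      have hnext : rot' p (((k : ℝ) + 1) * δ) a = rot' p δ (rot' p ((k : ℝ) * δ) a) := by
        rw [rot'_rot' p hpp]
        ring_nf
      have hdot : 2 * t ^ 2 - 1 ≤ (rot' p ((k : ℝ) * δ) a) ⬝ᵥ (rot' p δ (rot' p ((k : ℝ) * δ) a)) := by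
        have heq : (rot' p ((k : ℝ) * δ) a) ⬝ᵥ (rot' p δ (rot' p ((k : ℝ) * δ) a))
            = Real.cos δ + (1 - Real.cos δ) * (p ⬝ᵥ (rot' p ((k : ℝ) * δ) a)) ^ 2 := by
          generalize rot' p ((k : ℝ) * δ) a = wk at hwku ⊢
          rw [rot']
          simp only [dotProduct_add, dotProduct_smul, smul_eq_mul, hwku,
            dot_cross_self, dotProduct_comm wk p]
          ring
        have hc1 : Real.cos δ ≤ 1 := Real.cos_le_one δ
        rw [heq]
        nlinarith [sq_nonneg (p ⬝ᵥ (rot' p ((k : ℝ) * δ) a))]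
      push_cast
      rw [hnext]
      exact step_lemma hunit hclos hneg hPk hPc hck
        (by rw [rot'_dot p hpp, hwku]) hdot
  have hfin := (key m).1
  rw [hδθ, hrot] at hfin
  exact hfin
end Step

def toV (x : EuclideanSpace ℝ (Fin 3)) : Fin 3 → ℝ := x

lemma rot_eq_rot' (u : EuclideanSpace ℝ (Fin 3)) (φ : ℝ) (x : EuclideanSpace ℝ (Fin 3)) :
    toV (rot u φ x) = rot' (toV u) φ (toV x) := by
  funext i
  simp only [rot, rot', toV, PiLp.add_apply, PiLp.smul_apply, smul_eq_mul, Pi.add_apply,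
    Pi.smul_apply, PiLp.inner_apply, RCLike.inner_apply, starRingEnd_apply, star_trivial,
    dotProduct]
  simp [PiLp.inner_apply, dotProduct, mul_comm]

lemma image_transfer (S : Set (EuclideanSpace ℝ (Fin 3)))
    (f : EuclideanSpace ℝ (Fin 3) → EuclideanSpace ℝ (Fin 3)) (g : (Fin 3 → ℝ) → (Fin 3 → ℝ))
    (h : ∀ x, (f x).ofLp = g x.ofLp) :
    f '' S = S ↔ g '' (WithLp.ofLp '' S) = WithLp.ofLp '' S := by
  rw [← (Set.image_injective.mpr (WithLp.ofLp_injective 2)).eq_iff, ← Set.image_comp,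
    ← Set.image_comp]
  have : WithLp.ofLp ∘ f = g ∘ WithLp.ofLp := funext h
  rw [this]

lemma norm_unit_dot {u : EuclideanSpace ℝ (Fin 3)} (hu : ‖u‖ = 1) : (toV u) ⬝ᵥ (toV u) = 1 := by
  have h := real_inner_self_eq_norm_sq u
  rw [hu] at h
  simp only [one_pow] at h
  rw [← h]
  rw [EuclideanSpace.inner_eq_star_dotProduct, star_trivial]
  rfl

lemma rot'_neg_axis (a : Fin 3 → ℝ) (φ : ℝ) (x : Fin 3 → ℝ) :
    rot' (-a) φ x = rot' a (-φ) x := by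
  simp only [rot', Real.cos_neg, Real.sin_neg, map_neg, LinearMap.neg_apply,
    neg_dotProduct, smul_neg, neg_smul, mul_neg]
  module

-- function-level conjugation
lemma conj_rot {a : Fin 3 → ℝ} (ha : a ⬝ᵥ a = 1) (φ ψ : ℝ) (b x : Fin 3 → ℝ) :
    rot' (rot' a φ b) ψ x = rot' a φ (rot' b ψ (rot' a (-φ) x)) := by
  have h := conjQ (rotM_mem a ha φ) (rotM_det a ha φ) b ψ (rot' a (-φ) x)
  simp only [mulVec_rotM] at h
  rw [rot'_rot' a ha φ (-φ), add_neg_cancel, rot'_zero] at h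
  exact h.symm


/-- A symmetry `R` of a set `S` with a (unique) infinite-order rotational symmetry axis
`u` maps the line spanned by `u` to itself: `R u = u` or `R u = -u`. -/
theorem symmetry_preserves_infinite_axis (S : Set (EuclideanSpace ℝ (Fin 3)))
    (R : SO3) (hR : (fun x : EuclideanSpace ℝ (Fin 3) => WithLp.toLp 2 (R.1.1.mulVec x)) '' S = S)
    (u : EuclideanSpace ℝ (Fin 3)) (hu : ‖u‖ = 1)
    (hSu : ∀ φ : ℝ, rot u φ '' S = S)
    (hnot : ¬ ∀ Q : SO3, (fun x : EuclideanSpace ℝ (Fin 3) => WithLp.toLp 2 (Q.1.1.mulVec x)) '' S = S) :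
    R.1.1.mulVec u = u ∨ R.1.1.mulVec u = -u := by
  by_contra hcon
  rw [not_or] at hcon
  obtain ⟨hRu1, hRu2⟩ := hcon
  set A := R.1.1 with hA
  have hAmem : A ∈ Matrix.orthogonalGroup (Fin 3) ℝ := R.1.2
  have hAdet : A.det = 1 := R.2
  have hAtA : Aᵀ * A = 1 := by
    have := (Matrix.mem_orthogonalGroup_iff' (Fin 3) ℝ).mp hAmem
    exact this
  have hAAt : A * Aᵀ = 1 := by
    have := (Matrix.mem_orthogonalGroup_iff (Fin 3) ℝ).mp hAmem
    exact this
  -- plain versions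
  set T : Set (Fin 3 → ℝ) := WithLp.ofLp '' S with hT
  set uu : Fin 3 → ℝ := toV u with huu_def
  have huu : uu ⬝ᵥ uu = 1 := norm_unit_dot hu
  set v : Fin 3 → ℝ := A.mulVec uu with hv
  have hvv : v ⬝ᵥ v = 1 := by rw [hv, dotQ hAmem, huu]
  -- the invariance predicate
  set P : (Fin 3 → ℝ) → Prop := fun w => w ⬝ᵥ w = 1 ∧ ∀ φ, rot' w φ '' T = T with hP
  have hunit : ∀ a, P a → a ⬝ᵥ a = 1 := fun a h => h.1
  have hrotinv : ∀ (a : Fin 3 → ℝ), a ⬝ᵥ a = 1 → ∀ φ,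
      (rot' a φ) ∘ (rot' a (-φ)) = id := by
    intro a ha φ
    funext x
    simp only [Function.comp_apply, id_eq, rot'_rot' a ha, add_neg_cancel, rot'_zero]
  have hclos : ∀ a b φ, P a → P b → P (rot' a φ b) := by
    intro a b φ ⟨ha, hisa⟩ ⟨hb, hisb⟩
    refine ⟨by rw [rot'_dot a ha, hb], fun ψ => ?_⟩
    have hfun : rot' (rot' a φ b) ψ = (rot' a φ) ∘ (rot' b ψ) ∘ (rot' a (-φ)) :=
      funext fun x => conj_rot ha φ ψ b x
    rw [hfun, Set.image_comp, Set.image_comp, hisa (-φ), hisb ψ, hisa φ]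
  have hneg : ∀ a, P a → P (-a) := by
    intro a ⟨ha, hisa⟩
    refine ⟨by simp [neg_dotProduct, dotProduct_neg, ha], fun ψ => ?_⟩
    have : rot' (-a) ψ = rot' a (-ψ) := funext fun x => rot'_neg_axis a ψ x
    rw [this]
    exact hisa (-ψ)
  -- u satisfies P
  have hPu : P uu := by
    refine ⟨huu, fun φ => ?_⟩
    exact (image_transfer S _ _ (fun x => rot_eq_rot' u φ x)).mp (hSu φ)
  -- v = A u satisfies P
  have hmapsAinv : (fun x : Fin 3 → ℝ => Aᵀ.mulVec x) '' T = T := by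
    have h1 : (fun x : Fin 3 → ℝ => Aᵀ.mulVec x) '' ((fun x : Fin 3 → ℝ => A.mulVec x) '' T) = T := by
      rw [← Set.image_comp]
      have : ((fun x : Fin 3 → ℝ => Aᵀ.mulVec x) ∘ (fun x : Fin 3 → ℝ => A.mulVec x)) = id := by
        funext x
        simp only [Function.comp_apply, id_eq, Matrix.mulVec_mulVec, hAtA, Matrix.one_mulVec]
      rw [this, Set.image_id]
    have h2 : (fun x : Fin 3 → ℝ => A.mulVec x) '' T = T :=
      (image_transfer S _ (fun x : Fin 3 → ℝ => A.mulVec x) (fun x => rfl)).mp hR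
    rwa [h2] at h1
  have hPv : P v := by
    refine ⟨hvv, fun φ => ?_⟩
    have hfun : rot' v φ = (fun x : Fin 3 → ℝ => A.mulVec x) ∘ (rot' uu φ)
        ∘ (fun x : Fin 3 → ℝ => Aᵀ.mulVec x) := by
      funext x
      have h := conjQ hAmem hAdet uu φ (Aᵀ.mulVec x)
      rw [Matrix.mulVec_mulVec, hAAt, Matrix.one_mulVec] at h
      exact h.symm
    rw [hfun, Set.image_comp, Set.image_comp, hmapsAinv, hPu.2 φ]
    exact (image_transfer S _ (fun x : Fin 3 → ℝ => A.mulVec x) (fun x => rfl)).mp hR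
  -- u ⬝ᵥ v strictly between -1 and 1
  set t0 := uu ⬝ᵥ v with ht0
  have hsq := dot_sq_le_one huu hvv
  have ht1 : t0 < 1 := by
    rcases eq_or_lt_of_le (show t0 ≤ 1 by nlinarith) with h | h
    · exfalso
      exact hRu1 (eq_of_dot_eq_one huu hvv h)
    · exact h
  have ht2 : -1 < t0 := by
    rcases eq_or_lt_of_le (show -1 ≤ t0 by nlinarith) with h | h
    · exfalso
      apply hRu2
      have hnu : (-uu) ⬝ᵥ (-uu) = 1 := by simp [neg_dotProduct, dotProduct_neg, huu]
      have : (-uu) ⬝ᵥ v = 1 := by rw [neg_dotProduct]; linarith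
      exact eq_of_dot_eq_one hnu hvv this
    · exact h
  -- apply reach, with sign adjustment
  have hall : ∀ w, w ⬝ᵥ w = 1 → P w := by
    rcases le_or_gt 0 t0 with hs | hs
    · exact reach hunit hclos hneg hs ht1 hPu hPv ht0.symm
    · have hPv' : P (-v) := hneg v hPv
      have habs : uu ⬝ᵥ (-v) = -t0 := by rw [dotProduct_neg, ht0]
      exact reach hunit hclos hneg (by linarith : (0:ℝ) ≤ -t0) (by linarith) hPu hPv' habs
  -- contradiction with hnot
  apply hnot
  intro Q
  rw [image_transfer S _ (fun x : Fin 3 → ℝ => Q.1.1.mulVec x) (fun x => rfl)]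
  obtain ⟨w, φ, hww, hQ⟩ := euler Q.1.2 Q.2
  show Set.image (fun x : Fin 3 → ℝ => Q.1.1.mulVec x) T = T
  rw [show (fun x : Fin 3 → ℝ => Q.1.1.mulVec x) = rot' w φ from funext fun x => hQ x]
  exact (hall w hww).2 φ
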